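/- Let A ∈ ℝ^{n×n×n×n} be a partial-symmetric tensor. Then the infimum of ‖A − λ·X₁∘X₂‖_F over λ ∈ ℝ and matrices X₁, X₂ ∈ ℝ^{n×n} with ‖X₁‖_F = ‖X₂‖_F = 1 equals the infimum of ‖A − λ·X∘X‖_F over λ ∈ ℝ and symmetric matrices X ∈ ℝ^{n×n} with ‖X‖_F = 1. -/

import Mathlib

open scoped BigOperators

/-- A fourth-order real tensor is partial-symmetric. -/
def IsPS {n : ℕ} (A : Fin n → Fin n → Fin n → Fin n → ℝ) : Prop :=
  ∀ i j k l, A i j k l = A j i k l ∧ A i j k l = A i j l k ∧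
    A i j k l = A k l i j

/-- Frobenius norm of a fourth-order real tensor. -/
noncomputable def tNormR {n : ℕ} (A : Fin n → Fin n → Fin n → Fin n → ℝ) : ℝ :=
  Real.sqrt (∑ i, ∑ j, ∑ k, ∑ l, (A i j k l) ^ 2)

/-- Frobenius norm of a real matrix. -/
noncomputable def mNormR {n : ℕ} (X : Matrix (Fin n) (Fin n) ℝ) : ℝ :=
  Real.sqrt (∑ i, ∑ j, (X i j) ^ 2)

def mq {n : ℕ} (X : Matrix (Fin n) (Fin n) ℝ) : ℝ := ∑ i, ∑ j, (X i j)^2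
def tq {n : ℕ} (A : Fin n → Fin n → Fin n → Fin n → ℝ) : ℝ :=
  ∑ i, ∑ j, ∑ k, ∑ l, (A i j k l)^2

def fA {n : ℕ} (A : Fin n → Fin n → Fin n → Fin n → ℝ) (X Y : Matrix (Fin n) (Fin n) ℝ) : ℝ :=
  ∑ i, ∑ j, ∑ k, ∑ l, A i j k l * X i j * Y k l

variable {n : ℕ} {A : Fin n → Fin n → Fin n → Fin n → ℝ} {X Y Z : Matrix (Fin n) (Fin n) ℝ}

lemma expand (lam : ℝ) (X Y : Matrix (Fin n) (Fin n) ℝ) :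
    tq (fun i j k l => A i j k l - lam * X i j * Y k l)
      = tq A - 2*lam*fA A X Y + lam^2 * (mq X * mq Y) := by
  unfold tq fA mq
  have h : ∀ (i j k l : Fin n), (A i j k l - lam * X i j * Y k l)^2
      = A i j k l ^2 - 2*lam*(A i j k l * X i j * Y k l) + lam^2 * ((X i j)^2 * (Y k l)^2) := by
    intros; ring
  simp_rw [h, Finset.sum_add_distrib, Finset.sum_sub_distrib, ← Finset.mul_sum, ← Finset.sum_mul]

lemma mq_nonneg : 0 ≤ mq X := Finset.sum_nonneg fun _ _ => Finset.sum_nonneg fun _ _ => sq_nonneg _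

lemma mq_transpose : mq (fun i j => X j i) = mq X := Finset.sum_comm

lemma sum4_comm (g : Fin n → Fin n → Fin n → Fin n → ℝ) :
    ∑ i, ∑ j, ∑ k, ∑ l, g i j k l = ∑ k, ∑ l, ∑ i, ∑ j, g i j k l := by
  have s1 : ∀ (F : Fin n → Fin n → ℝ), (∑ a, ∑ b, F a b) = ∑ b, ∑ a, F a b := fun F => Finset.sum_comm
  calc ∑ i, ∑ j, ∑ k, ∑ l, g i j k l
      = ∑ i, ∑ k, ∑ j, ∑ l, g i j k l := Finset.sum_congr rfl fun i _ => s1 _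
    _ = ∑ k, ∑ i, ∑ j, ∑ l, g i j k l := s1 _
    _ = ∑ k, ∑ i, ∑ l, ∑ j, g i j k l := Finset.sum_congr rfl fun k _ => Finset.sum_congr rfl fun i _ => s1 _
    _ = ∑ k, ∑ l, ∑ i, ∑ j, g i j k l := Finset.sum_congr rfl fun k _ => s1 _

lemma fA_swap (hA : IsPS A) : fA A X Y = fA A Y X := by
  unfold fA
  have h1 : (∑ i, ∑ j, ∑ k, ∑ l, A i j k l * X i j * Y k l)
      = ∑ i, ∑ j, ∑ k, ∑ l, A k l i j * X i j * Y k l :=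
    Finset.sum_congr rfl fun i _ => Finset.sum_congr rfl fun j _ =>
      Finset.sum_congr rfl fun k _ => Finset.sum_congr rfl fun l _ => by
        rw [← (hA i j k l).2.2]
  rw [h1, sum4_comm]
  refine Finset.sum_congr rfl fun i _ => Finset.sum_congr rfl fun j _ =>
    Finset.sum_congr rfl fun k _ => Finset.sum_congr rfl fun l _ => by ring

lemma fA_transpose_left (hA : IsPS A) : fA A (fun i j => X j i) Y = fA A X Y := by
  unfold fA
  rw [show (∑ i, ∑ j, ∑ k, ∑ l, A i j k l * X j i * Y k l)
      = ∑ j, ∑ i, ∑ k, ∑ l, A i j k l * X j i * Y k l from Finset.sum_comm]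
  refine Finset.sum_congr rfl fun i _ => Finset.sum_congr rfl fun j _ =>
    Finset.sum_congr rfl fun k _ => Finset.sum_congr rfl fun l _ => ?_
  rw [← (hA j i k l).1]

lemma fA_smul_left (c : ℝ) : fA A (fun i j => c * X i j) Y = c * fA A X Y := by
  unfold fA
  simp_rw [Finset.mul_sum]
  refine Finset.sum_congr rfl fun i _ => Finset.sum_congr rfl fun j _ =>
    Finset.sum_congr rfl fun k _ => Finset.sum_congr rfl fun l _ => by ring

lemma fA_add_left : fA A (fun i j => X i j + Z i j) Y = fA A X Y + fA A Z Y := by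
  unfold fA
  simp_rw [← Finset.sum_add_distrib]
  refine Finset.sum_congr rfl fun i _ => Finset.sum_congr rfl fun j _ =>
    Finset.sum_congr rfl fun k _ => Finset.sum_congr rfl fun l _ => by ring

lemma fA_sub_left : fA A (fun i j => X i j - Z i j) Y = fA A X Y - fA A Z Y := by
  unfold fA
  simp_rw [← Finset.sum_sub_distrib]
  refine Finset.sum_congr rfl fun i _ => Finset.sum_congr rfl fun j _ =>
    Finset.sum_congr rfl fun k _ => Finset.sum_congr rfl fun l _ => by ring

lemma fA_symPart_left (hA : IsPS A) :
    fA A (fun i j => (X i j + X j i)/2) Y = fA A X Y := by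
  have h : (fun i j => (X i j + X j i)/2)
      = fun i j => (1/2) * ((fun a b => X a b + X b a : Matrix (Fin n) (Fin n) ℝ) i j) := by
    funext i j; ring
  rw [h]
  erw [fA_smul_left, fA_add_left, fA_transpose_left hA]
  ring

lemma mq_symPart_le : mq (fun i j => (X i j + X j i)/2) ≤ mq X := by
  have key : mq (fun i j => (X i j + X j i)/2) + mq (fun i j => (X i j - X j i)/2)
      = (mq X + mq (fun i j => X j i))/2 := by
    unfold mq
    simp_rw [← Finset.sum_add_distrib, Finset.sum_div]
    refine Finset.sum_congr rfl fun i _ => Finset.sum_congr rfl fun j _ => by ring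
  have h2 : mq (fun i j => X j i) = mq X := mq_transpose
  have h3 : (0:ℝ) ≤ mq (fun i j => (X i j - X j i)/2) := mq_nonneg
  rw [h2] at key
  linarith

lemma mq_add_sub (S T : Matrix (Fin n) (Fin n) ℝ) :
    mq (fun i j => S i j + T i j) + mq (fun i j => S i j - T i j) = 2*(mq S + mq T) := by
  unfold mq
  simp_rw [← Finset.sum_add_distrib, Finset.mul_sum]
  refine Finset.sum_congr rfl fun i _ => Finset.sum_congr rfl fun j _ => by ring

lemma mq_smul (c : ℝ) : mq (fun i j => c * X i j) = c^2 * mq X := by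
  unfold mq
  simp_rw [Finset.mul_sum]
  refine Finset.sum_congr rfl fun i _ => Finset.sum_congr rfl fun j _ => by ring

lemma mq_eq_zero (h : mq X = 0) : ∀ i j, X i j = 0 := by
  intro i j
  have h1 := (Finset.sum_eq_zero_iff_of_nonneg (fun i _ =>
    (Finset.sum_nonneg fun _ _ => sq_nonneg _ : (0:ℝ) ≤ ∑ j, (X i j)^2))).1 h i (Finset.mem_univ i)
  have h2 := (Finset.sum_eq_zero_iff_of_nonneg (fun j _ => sq_nonneg (X i j))).1 h1 j (Finset.mem_univ j)
  exact (pow_eq_zero_iff two_ne_zero).mp h2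

lemma fA_zero_of_mq_zero (h : mq X = 0) : fA A X Y = 0 := by
  unfold fA
  refine Finset.sum_eq_zero fun i _ => Finset.sum_eq_zero fun j _ =>
    Finset.sum_eq_zero fun k _ => Finset.sum_eq_zero fun l _ => by
      rw [mq_eq_zero h i j]; ring

lemma polarization (hA : IsPS A) (S T : Matrix (Fin n) (Fin n) ℝ) :
    4 * fA A S T = fA A (fun i j => S i j + T i j) (fun i j => S i j + T i j)
      - fA A (fun i j => S i j - T i j) (fun i j => S i j - T i j) := by
  have hswap : ∀ (U V : Matrix (Fin n) (Fin n) ℝ), fA A U V = fA A V U := fun U V => fA_swap hA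
  have h1 : fA A (fun i j => S i j + T i j) (fun i j => S i j + T i j)
      = fA A S (fun i j => S i j + T i j) + fA A T (fun i j => S i j + T i j) := fA_add_left
  have h2 : fA A S (fun i j => S i j + T i j) = fA A S S + fA A T S := by
    exact (hswap _ _).trans fA_add_left
  have h3 : fA A T (fun i j => S i j + T i j) = fA A S T + fA A T T := by
    exact (hswap _ _).trans fA_add_left
  have h4 : fA A (fun i j => S i j - T i j) (fun i j => S i j - T i j)
      = fA A S (fun i j => S i j - T i j) - fA A T (fun i j => S i j - T i j) := fA_sub_left
  have h5 : fA A S (fun i j => S i j - T i j) = fA A S S - fA A T S := by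
    exact (hswap _ _).trans fA_sub_left
  have h6 : fA A T (fun i j => S i j - T i j) = fA A S T - fA A T T := by
    exact (hswap _ _).trans fA_sub_left
  have h7 : fA A T S = fA A S T := hswap T S
  rw [h1, h2, h3, h4, h5, h6, h7]; ring

/-- The standard unit symmetric matrix E₀₀ for n > 0. -/
lemma exists_unit_symm (hn : 0 < n) :
    ∃ X : Matrix (Fin n) (Fin n) ℝ, X.IsSymm ∧ mq X = 1 := by
  haveI : NeZero n := ⟨hn.ne'⟩
  refine ⟨fun i j => if i = 0 ∧ j = 0 then 1 else 0, ?_, ?_⟩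
  · refine Matrix.IsSymm.ext fun i j => ?_
    by_cases h1 : i = 0 <;> by_cases h2 : j = 0 <;> simp [h1, h2, and_comm]
  · unfold mq
    have h : ∀ i j : Fin n, ((if i = 0 ∧ j = 0 then (1:ℝ) else 0))^2
        = if i = 0 then (if j = 0 then 1 else 0) else 0 := by
      intro i j; by_cases h1 : i = 0 <;> by_cases h2 : j = 0 <;> simp [h1, h2]
    simp_rw [h]
    simp [Finset.sum_ite_eq']

lemma fA_smul_right (hA : IsPS A) (c : ℝ) :
    fA A X (fun i j => c * Y i j) = c * fA A X Y := by
  exact (fA_swap hA).trans ((fA_smul_left c).trans (congrArg _ (fA_swap hA)))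

/-- Normalization: from a nonzero symmetric matrix, get a unit one with at least
the same normalized quadratic value. -/
lemma normalize_step (hA : IsPS A) (Y : Matrix (Fin n) (Fin n) ℝ) (hY : Y.IsSymm) (hm : mq Y ≠ 0) :
    ∃ X : Matrix (Fin n) (Fin n) ℝ, X.IsSymm ∧ mq X = 1 ∧
      fA A Y Y = mq Y * fA A X X := by
  have hpos : 0 < mq Y := lt_of_le_of_ne mq_nonneg (Ne.symm hm)
  set r := Real.sqrt (mq Y) with hr
  have hrpos : 0 < r := Real.sqrt_pos.2 hpos
  have hr2 : r^2 = mq Y := Real.sq_sqrt hpos.le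
  refine ⟨fun i j => (1/r) * Y i j, ?_, ?_, ?_⟩
  · refine Matrix.IsSymm.ext fun i j => ?_
    beta_reduce
    rw [show Y j i = Y.transpose i j from rfl, hY]
  · rw [mq_smul]
    rw [← hr2]
    field_simp
  · have h1 : fA A (fun i j => (1/r) * Y i j) (fun i j => (1/r) * Y i j)
        = (1/r) * fA A Y (fun i j => (1/r) * Y i j) := fA_smul_left _
    have h2 : fA A Y (fun i j => (1/r) * Y i j) = (1/r) * fA A Y Y :=
      fA_smul_right hA _
    rw [h1, h2]
    have hr0 : r ≠ 0 := hrpos.ne'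
    field_simp
    rw [← hr2]

lemma getX (hn : 0 < n) (hA : IsPS A) (Y : Matrix (Fin n) (Fin n) ℝ) (hY : Y.IsSymm) :
    ∃ X : Matrix (Fin n) (Fin n) ℝ, X.IsSymm ∧ mq X = 1 ∧ fA A Y Y = mq Y * fA A X X := by
  by_cases h : mq Y = 0
  · obtain ⟨E, hE1, hE2⟩ := exists_unit_symm hn
    exact ⟨E, hE1, hE2, by rw [h, fA_zero_of_mq_zero h]; ring⟩
  · exact normalize_step hA Y hY h

set_option maxHeartbeats 1000000 in
lemma exists_sym (hn : 0 < n) (hA : IsPS A) (X₁ X₂ : Matrix (Fin n) (Fin n) ℝ)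
    (h1 : mq X₁ = 1) (h2 : mq X₂ = 1) :
    ∃ X : Matrix (Fin n) (Fin n) ℝ, X.IsSymm ∧ mq X = 1 ∧
      (fA A X₁ X₂)^2 ≤ (fA A X X)^2 := by
  set S₁ : Matrix (Fin n) (Fin n) ℝ := fun i j => (X₁ i j + X₁ j i)/2 with hS₁
  set S₂ : Matrix (Fin n) (Fin n) ℝ := fun i j => (X₂ i j + X₂ j i)/2 with hS₂
  set P : Matrix (Fin n) (Fin n) ℝ := fun i j => S₁ i j + S₂ i j with hP
  set Q : Matrix (Fin n) (Fin n) ℝ := fun i j => S₁ i j - S₂ i j with hQ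
  have hPsymm : P.IsSymm := by
    refine Matrix.IsSymm.ext fun i j => ?_; simp only [hP, hS₁, hS₂]; ring
  have hQsymm : Q.IsSymm := by
    refine Matrix.IsSymm.ext fun i j => ?_; simp only [hQ, hS₁, hS₂]; ring
  have ht : fA A X₁ X₂ = fA A S₁ S₂ := by
    exact (fA_symPart_left (X := X₁) (Y := X₂) hA).symm.trans ((fA_swap hA).trans
      ((fA_symPart_left (X := X₂) (Y := S₁) hA).symm.trans (fA_swap hA)))
  have hpol : 4 * fA A S₁ S₂ = fA A P P - fA A Q Q := polarization hA S₁ S₂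
  have hm1 : mq S₁ ≤ mq X₁ := mq_symPart_le
  have hm2 : mq S₂ ≤ mq X₂ := mq_symPart_le
  have hmPQ : mq P + mq Q = 2*(mq S₁ + mq S₂) := mq_add_sub S₁ S₂
  have hmP0 : (0:ℝ) ≤ mq P := mq_nonneg
  have hmQ0 : (0:ℝ) ≤ mq Q := mq_nonneg
  have hsum4 : mq P + mq Q ≤ 4 := by rw [hmPQ]; linarith
  obtain ⟨XP, hXP1, hXP2, hXP3⟩ := getX hn hA P hPsymm
  obtain ⟨XQ, hXQ1, hXQ2, hXQ3⟩ := getX hn hA Q hQsymm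
  set t := fA A X₁ X₂ with htd
  set fP := fA A XP XP with hfPd
  set fQ := fA A XQ XQ with hfQd
  clear_value t fP fQ
  have key : 4 * t = mq P * fP - mq Q * fQ := by
    rw [ht, hpol, hXP3, hXQ3]
  rcases le_total |fQ| |fP| with hc | hc
  · refine ⟨XP, hXP1, hXP2, ?_⟩
    have b0 : (0:ℝ) ≤ |fP| := abs_nonneg _
    have e1 : fP ≤ |fP| := le_abs_self _
    have e2 : -|fP| ≤ fP := neg_abs_le _
    have e3 : fQ ≤ |fP| := le_trans (le_abs_self _) hc
    have e4 : -|fP| ≤ fQ := le_trans (neg_le_neg hc) (neg_abs_le _)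
    have u1 := mul_le_mul_of_nonneg_left e1 hmP0
    have u2 := mul_le_mul_of_nonneg_left e2 hmP0
    have u3 := mul_le_mul_of_nonneg_left e3 hmQ0
    have u4 := mul_le_mul_of_nonneg_left e4 hmQ0
    have hub : 4 * t ≤ (mq P + mq Q) * |fP| := by nlinarith [u1, u4]
    have hlb : -((mq P + mq Q) * |fP|) ≤ 4 * t := by nlinarith [u2, u3]
    have hs : (mq P + mq Q) * |fP| ≤ 4 * |fP| := mul_le_mul_of_nonneg_right hsum4 b0
    have habs : t^2 ≤ |fP|^2 := by
      nlinarith [mul_nonneg (by linarith : (0:ℝ) ≤ 4*|fP| - 4*t)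
        (by linarith : (0:ℝ) ≤ 4*|fP| + 4*t)]
    rwa [sq_abs, hfPd] at habs
  · refine ⟨XQ, hXQ1, hXQ2, ?_⟩
    have b0 : (0:ℝ) ≤ |fQ| := abs_nonneg _
    have e1 : fQ ≤ |fQ| := le_abs_self _
    have e2 : -|fQ| ≤ fQ := neg_abs_le _
    have e3 : fP ≤ |fQ| := le_trans (le_abs_self _) hc
    have e4 : -|fQ| ≤ fP := le_trans (neg_le_neg hc) (neg_abs_le _)
    have u1 := mul_le_mul_of_nonneg_left e1 hmQ0
    have u2 := mul_le_mul_of_nonneg_left e2 hmQ0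
    have u3 := mul_le_mul_of_nonneg_left e3 hmP0
    have u4 := mul_le_mul_of_nonneg_left e4 hmP0
    have hub : 4 * t ≤ (mq P + mq Q) * |fQ| := by nlinarith [u3, u2]
    have hlb : -((mq P + mq Q) * |fQ|) ≤ 4 * t := by nlinarith [u4, u1]
    have hs : (mq P + mq Q) * |fQ| ≤ 4 * |fQ| := mul_le_mul_of_nonneg_right hsum4 b0
    have habs : t^2 ≤ |fQ|^2 := by
      nlinarith [mul_nonneg (by linarith : (0:ℝ) ≤ 4*|fQ| - 4*t)
        (by linarith : (0:ℝ) ≤ 4*|fQ| + 4*t)]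
    rwa [sq_abs, hfQd] at habs


lemma tNormR_eq {n : ℕ} (A : Fin n → Fin n → Fin n → Fin n → ℝ) :
    tNormR A = Real.sqrt (tq A) := rfl

lemma mNormR_eq {n : ℕ} (X : Matrix (Fin n) (Fin n) ℝ) :
    mNormR X = Real.sqrt (mq X) := rfl

lemma mNormR_eq_one_iff {n : ℕ} (X : Matrix (Fin n) (Fin n) ℝ) :
    mNormR X = 1 ↔ mq X = 1 := by
  rw [mNormR_eq]
  constructor
  · intro h
    have := Real.sq_sqrt (mq_nonneg (X := X))
    rw [h] at this
    linarith [this]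
  · intro h; rw [h, Real.sqrt_one]

/-- For a partial-symmetric tensor, the best matrix outer product rank-one
approximation over arbitrary unit-norm matrix pairs is as good as the one
over a single unit-norm symmetric matrix. -/
theorem ps_best_rank_one_symmetric {n : ℕ}
    (A : Fin n → Fin n → Fin n → Fin n → ℝ) (hA : IsPS A) :
    sInf {v : ℝ | ∃ (lam : ℝ) (X₁ X₂ : Matrix (Fin n) (Fin n) ℝ),
        mNormR X₁ = 1 ∧ mNormR X₂ = 1 ∧
        v = tNormR (fun i j k l => A i j k l - lam * X₁ i j * X₂ k l)} =
    sInf {v : ℝ | ∃ (lam : ℝ) (X : Matrix (Fin n) (Fin n) ℝ),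
        X.IsSymm ∧ mNormR X = 1 ∧
        v = tNormR (fun i j k l => A i j k l - lam * X i j * X k l)} := by
  set L := {v : ℝ | ∃ (lam : ℝ) (X₁ X₂ : Matrix (Fin n) (Fin n) ℝ),
      mNormR X₁ = 1 ∧ mNormR X₂ = 1 ∧
      v = tNormR (fun i j k l => A i j k l - lam * X₁ i j * X₂ k l)} with hLdef
  set R := {v : ℝ | ∃ (lam : ℝ) (X : Matrix (Fin n) (Fin n) ℝ),
      X.IsSymm ∧ mNormR X = 1 ∧
      v = tNormR (fun i j k l => A i j k l - lam * X i j * X k l)} with hRdef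
  rcases Nat.eq_zero_or_pos n with hn | hn
  · subst hn
    have hL : L = ∅ := by
      rw [hLdef]
      ext v
      simp only [Set.mem_setOf_eq, Set.mem_empty_iff_false, iff_false, not_exists]
      rintro lam X₁ X₂ ⟨h1, _, _⟩
      rw [mNormR_eq_one_iff] at h1
      simp [mq] at h1
    have hR : R = ∅ := by
      rw [hRdef]
      ext v
      simp only [Set.mem_setOf_eq, Set.mem_empty_iff_false, iff_false, not_exists]
      rintro lam X ⟨_, h1, _⟩
      rw [mNormR_eq_one_iff] at h1
      simp [mq] at h1
    rw [hL, hR]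
  · obtain ⟨E, hE1, hE2⟩ := exists_unit_symm hn
    have hRne : R.Nonempty :=
      ⟨_, 0, E, hE1, (mNormR_eq_one_iff E).2 hE2, rfl⟩
    have hsub : R ⊆ L := by
      rintro v ⟨lam, X, _, hX, hv⟩
      exact ⟨lam, X, X, hX, hX, hv⟩
    have hLne : L.Nonempty := hRne.mono hsub
    have hbL : BddBelow L := by
      refine ⟨0, fun v hv => ?_⟩
      obtain ⟨lam, X₁, X₂, _, _, rfl⟩ := hv
      rw [tNormR_eq]
      exact Real.sqrt_nonneg _
    have hbR : BddBelow R := by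
      refine ⟨0, fun v hv => ?_⟩
      obtain ⟨lam, X, _, _, rfl⟩ := hv
      rw [tNormR_eq]
      exact Real.sqrt_nonneg _
    apply le_antisymm
    · exact csInf_le_csInf hbL hRne hsub
    · apply le_csInf hLne
      rintro v ⟨lam, X₁, X₂, h1, h2, rfl⟩
      rw [mNormR_eq_one_iff] at h1 h2
      obtain ⟨X, hXs, hX1, hle⟩ := exists_sym hn hA X₁ X₂ h1 h2
      have hmem : tNormR (fun i j k l => A i j k l - (fA A X X) * X i j * X k l) ∈ R :=
        ⟨fA A X X, X, hXs, (mNormR_eq_one_iff X).2 hX1, rfl⟩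
      refine le_trans (csInf_le hbR hmem) ?_
      rw [tNormR_eq, tNormR_eq, expand, expand, hX1, h1, h2]
      apply Real.sqrt_le_sqrt
      nlinarith [sq_nonneg (lam - fA A X₁ X₂), hle]
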